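/- Let d ≥ 2 and let (aₙ)_{n≥0} be real coefficients such that the power series F(x) = ∑_{n=0}^∞ aₙ xⁿ converges for every x ∈ ℝ_{≥0}. Define bₙ = (√π Γ((n+d)/2) / (Γ(d/2) Γ((n+1)/2))) aₙ. Then the power series f(x) = ∑_{n=0}^∞ bₙ xⁿ also converges for every x ∈ ℝ_{≥0}, and for all x, y ∈ ℝ^d one has ∫_{S^{d-1}} f(|⟨ξ, x - y⟩|) dU(ξ) = F(‖x - y‖), where U is the uniform (normalized rotation-invariant) probability measure on the unit sphere S^{d-1} ⊆ ℝ^d. -/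

import Mathlib

open MeasureTheory Metric
open scoped RealInnerProductSpace

/-- The uniform (normalized rotation-invariant) probability measure on the unit sphere
`S^{d-1} ⊆ ℝ^d`, obtained by normalizing the surface measure. -/
noncomputable def uniformSphere (d : ℕ) :
    Measure (sphere (0 : EuclideanSpace ℝ (Fin d)) 1) :=
  ((volume : Measure (EuclideanSpace ℝ (Fin d))).toSphere Set.univ)⁻¹ •
    (volume : Measure (EuclideanSpace ℝ (Fin d))).toSphere

section aux
open Real Set

lemma RK.gammaIoi (m : ℕ) :
    ∫ x in Ioi (0 : ℝ), x ^ m * Real.exp (-x ^ 2) = (1 / 2) * Real.Gamma (((m : ℝ) + 1) / 2) := by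
  rw [← integral_rpow_mul_exp_neg_rpow (two_pos)
    (by exact_mod_cast neg_one_lt_zero.trans_le (Nat.cast_nonneg m))]
  refine setIntegral_congr_fun measurableSet_Ioi (fun x hx => ?_)
  rw [Real.rpow_natCast, Real.rpow_two]

lemma RK.gaussAbsPow (n : ℕ) :
    ∫ t : ℝ, |t| ^ n * Real.exp (-t ^ 2) = Real.Gamma (((n : ℝ) + 1) / 2) := by
  have h : ∀ t : ℝ, |t| ^ n * Real.exp (-t ^ 2) = |t| ^ n * Real.exp (-|t| ^ 2) := by
    intro t; rw [sq_abs]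
  simp_rw [h]
  rw [integral_comp_abs (f := fun x => x ^ n * Real.exp (-x ^ 2)), RK.gammaIoi]
  ring

lemma RK.euclidGauss (d : ℕ) (hd : 1 ≤ d) (u : EuclideanSpace ℝ (Fin d)) (hu : ‖u‖ = 1) (n : ℕ) :
    ∫ x : EuclideanSpace ℝ (Fin d), |⟪x, u⟫| ^ n * Real.exp (-‖x‖ ^ 2)
      = Real.Gamma (((n : ℝ) + 1) / 2) * Real.sqrt Real.pi ^ (d - 1) := by
  haveI : NeZero d := ⟨by omega⟩
  have hcard : Module.finrank ℝ (EuclideanSpace ℝ (Fin d)) = Fintype.card (Fin d) := by simp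
  have horth : Orthonormal ℝ (({0} : Set (Fin d)).restrict (fun _ => u)) := by
    rw [orthonormal_iff_ite]
    intro i j
    rw [if_pos (Subsingleton.elim i j)]
    show ⟪u, u⟫ = (1:ℝ)
    rw [real_inner_self_eq_norm_sq, hu]; norm_num
  obtain ⟨b, hb⟩ := horth.exists_orthonormalBasis_extension_of_card_eq hcard
  have hb0 : b 0 = u := hb 0 rfl
  set F : (EuclideanSpace ℝ (Fin d)) → ℝ := fun x => |⟪x, u⟫| ^ n * Real.exp (-‖x‖ ^ 2) with hF
  have step1 : ∫ w : EuclideanSpace ℝ (Fin d), F (b.repr.symm w) = ∫ x, F x :=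
    b.measurePreserving_repr_symm.integral_comp
      (b.measurableEquiv.symm.measurableEmbedding) F
  have step2 : ∫ y : Fin d → ℝ, F (b.repr.symm (MeasurableEquiv.toLp 2 (Fin d → ℝ) y))
      = ∫ w : EuclideanSpace ℝ (Fin d), F (b.repr.symm w) :=
    MeasurePreserving.integral_comp ((EuclideanSpace.volume_preserving_symm_measurableEquiv_toLp (Fin d)).symm
      (MeasurableEquiv.toLp 2 (Fin d → ℝ)).symm)
      (MeasurableEquiv.measurableEmbedding _) (fun w => F (b.repr.symm w))
  set g : Fin d → ℝ → ℝ := fun i t => (if i = 0 then |t| ^ n else 1) * Real.exp (-t ^ 2) with hg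
  have key : ∀ y : Fin d → ℝ,
      F (b.repr.symm (MeasurableEquiv.toLp 2 (Fin d → ℝ) y)) = ∏ i, g i (y i) := by
    intro y
    set w : EuclideanSpace ℝ (Fin d) := MeasurableEquiv.toLp 2 (Fin d → ℝ) y with hw
    have hwi : ∀ i, w i = y i := fun i => rfl
    have h1 : ⟪b.repr.symm w, u⟫ = y 0 := by
      rw [← hb0, real_inner_comm, ← b.repr_apply_apply, LinearIsometryEquiv.apply_symm_apply, hwi]
    have h2 : ‖b.repr.symm w‖ ^ 2 = ∑ i, y i ^ 2 := by
      rw [LinearIsometryEquiv.norm_map, EuclideanSpace.norm_eq,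
        Real.sq_sqrt (by positivity)]
      exact Finset.sum_congr rfl fun i _ => by rw [hwi, Real.norm_eq_abs, sq_abs]
    rw [hF]
    simp only [h1, h2]
    rw [← Finset.sum_neg_distrib, Real.exp_sum, hg]
    rw [Finset.prod_mul_distrib]
    congr 1
    rw [Finset.prod_ite_eq' Finset.univ (0 : Fin d) (fun i => |y i| ^ n)]
    simp
  rw [← step1, ← step2]
  simp_rw [key]
  rw [MeasureTheory.integral_fintype_prod_volume_eq_prod (ι := Fin d) g]
  have h0 : ∫ t : ℝ, g 0 t = Real.Gamma (((n : ℝ) + 1) / 2) := by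
    simp only [hg, if_pos rfl]; exact RK.gaussAbsPow n
  have hi : ∀ i : Fin d, i ≠ 0 → ∫ t : ℝ, g i t = Real.sqrt Real.pi := by
    intro i hi
    simp only [hg, if_neg hi, one_mul]
    have : ∀ t : ℝ, Real.exp (-t ^ 2) = Real.exp (-1 * t ^ 2) := fun t => by ring_nf
    simp_rw [this]
    rw [integral_gaussian]; norm_num
  rw [← Finset.mul_prod_erase Finset.univ _ (Finset.mem_univ (0 : Fin d)), h0]
  congr 1
  rw [Finset.prod_congr rfl (fun i hi' => hi i (Finset.ne_of_mem_erase hi')), Finset.prod_const,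
    Finset.card_erase_of_mem (Finset.mem_univ _), Finset.card_univ, Fintype.card_fin]

lemma RK.spherePolar (d : ℕ) (hd : 1 ≤ d) (u : EuclideanSpace ℝ (Fin d)) (n : ℕ) :
    ∫ x : EuclideanSpace ℝ (Fin d), |⟪x, u⟫| ^ n * Real.exp (-‖x‖ ^ 2)
      = (∫ ξ : sphere (0 : EuclideanSpace ℝ (Fin d)) 1,
          |⟪(ξ : EuclideanSpace ℝ (Fin d)), u⟫| ^ n
            ∂((volume : Measure (EuclideanSpace ℝ (Fin d))).toSphere))
        * ((1 / 2) * Real.Gamma (((n : ℝ) + d) / 2)) := by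
  haveI : Nonempty (Fin d) := ⟨⟨0, by omega⟩⟩
  haveI : Nontrivial (EuclideanSpace ℝ (Fin d)) := by
    refine Module.nontrivial_of_finrank_pos (R := ℝ) ?_
    rw [finrank_euclideanSpace_fin]; omega
  set F : (EuclideanSpace ℝ (Fin d)) → ℝ := fun x => |⟪x, u⟫| ^ n * Real.exp (-‖x‖ ^ 2) with hF
  set G : sphere (0 : (EuclideanSpace ℝ (Fin d))) 1 × Ioi (0 : ℝ) → ℝ :=
    fun p => |⟪(p.1 : (EuclideanSpace ℝ (Fin d))), u⟫| ^ n
      * ((p.2 : ℝ) ^ n * Real.exp (-(p.2 : ℝ) ^ 2)) with hG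
  have hdim : Module.finrank ℝ (EuclideanSpace ℝ (Fin d)) = d := finrank_euclideanSpace_fin
  calc
    ∫ x : (EuclideanSpace ℝ (Fin d)), F x
        = ∫ x : ({(0 : (EuclideanSpace ℝ (Fin d)))}ᶜ : Set (EuclideanSpace ℝ (Fin d))), F x.1
            ∂(volume.comap Subtype.val) := by
      rw [integral_subtype_comap (measurableSet_singleton _).compl F, restrict_compl_singleton]
    _ = ∫ x : ({(0 : (EuclideanSpace ℝ (Fin d)))}ᶜ : Set (EuclideanSpace ℝ (Fin d))),
          G (homeomorphUnitSphereProd (EuclideanSpace ℝ (Fin d)) x) ∂(volume.comap Subtype.val) := by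
      refine integral_congr_ae (Filter.Eventually.of_forall fun x => ?_)
      have hx : (x : (EuclideanSpace ℝ (Fin d))) ≠ 0 := x.2
      have hn : ‖(x : (EuclideanSpace ℝ (Fin d)))‖ ≠ 0 := norm_ne_zero_iff.2 hx
      simp only [hG, homeomorphUnitSphereProd_apply_fst_coe, homeomorphUnitSphereProd_apply_snd_coe]
      rw [real_inner_smul_left]
      rw [abs_mul, mul_pow, abs_inv, abs_norm]
      have : (‖(x : (EuclideanSpace ℝ (Fin d)))‖⁻¹) ^ n * |⟪(x : (EuclideanSpace ℝ (Fin d))), u⟫| ^ n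
            * (‖(x : (EuclideanSpace ℝ (Fin d)))‖ ^ n
              * Real.exp (-‖(x : (EuclideanSpace ℝ (Fin d)))‖ ^ 2))
          = (‖(x : (EuclideanSpace ℝ (Fin d)))‖⁻¹ * ‖(x : (EuclideanSpace ℝ (Fin d)))‖) ^ n
            * (|⟪(x : (EuclideanSpace ℝ (Fin d))), u⟫| ^ n
              * Real.exp (-‖(x : (EuclideanSpace ℝ (Fin d)))‖ ^ 2)) := by
        ring
      rw [this, inv_mul_cancel₀ hn, one_pow, one_mul]
    _ = ∫ p : sphere (0 : (EuclideanSpace ℝ (Fin d))) 1 × Ioi (0 : ℝ), G p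
          ∂((volume : Measure (EuclideanSpace ℝ (Fin d))).toSphere.prod
            (.volumeIoiPow (Module.finrank ℝ (EuclideanSpace ℝ (Fin d)) - 1))) :=
      (volume : Measure (EuclideanSpace ℝ (Fin d))).measurePreserving_homeomorphUnitSphereProd.integral_comp
        (Homeomorph.measurableEmbedding _) G
    _ = (∫ ξ : sphere (0 : (EuclideanSpace ℝ (Fin d))) 1, |⟪(ξ : (EuclideanSpace ℝ (Fin d))), u⟫| ^ n
          ∂((volume : Measure (EuclideanSpace ℝ (Fin d))).toSphere))
        * ∫ r : Ioi (0 : ℝ), (r : ℝ) ^ n * Real.exp (-(r : ℝ) ^ 2)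
            ∂(Measure.volumeIoiPow (Module.finrank ℝ (EuclideanSpace ℝ (Fin d)) - 1)) :=
      integral_prod_mul
        (fun ξ : sphere (0 : EuclideanSpace ℝ (Fin d)) 1 =>
          |⟪(ξ : EuclideanSpace ℝ (Fin d)), u⟫| ^ n)
        (fun r : Ioi (0:ℝ) => (r : ℝ) ^ n * Real.exp (-(r : ℝ) ^ 2))
    _ = _ := by
      congr 1
      rw [Measure.volumeIoiPow]
      simp only [ENNReal.ofReal]
      rw [integral_withDensity_eq_integral_smul
        ((measurable_subtype_coe.pow_const _).real_toNNReal) _,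
        integral_subtype_comap measurableSet_Ioi
          (fun a : ℝ => (a ^ (Module.finrank ℝ (EuclideanSpace ℝ (Fin d)) - 1)).toNNReal
            • (a ^ n * Real.exp (-a ^ 2)))]
      rw [setIntegral_congr_fun measurableSet_Ioi
        (g := fun x : ℝ => x ^ (d - 1 + n) * Real.exp (-x ^ 2)) (fun x hx => ?_)]
      · rw [RK.gammaIoi]
        congr 2
        have : ((d - 1 + n : ℕ) : ℝ) = (n : ℝ) + d - 1 := by
          push_cast [Nat.cast_sub (by omega : 1 ≤ d)]; ring
        rw [this]; ring
      · rw [NNReal.smul_def, Real.coe_toNNReal _ (pow_nonneg (le_of_lt hx) _), smul_eq_mul, hdim]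
        show x ^ (d - 1) * (x ^ n * Real.exp (-x ^ 2)) = x ^ (d - 1 + n) * Real.exp (-x ^ 2)
        rw [pow_add]; ring

end aux
section aux2
open Real Set

lemma RK.sqrtpi_pos : (0:ℝ) < Real.sqrt Real.pi := Real.sqrt_pos.2 Real.pi_pos

lemma RK.toSphere_univ_ne_zero (d : ℕ) (hd : 1 ≤ d) :
    ((volume : Measure (EuclideanSpace ℝ (Fin d))).toSphere Set.univ) ≠ 0 := by
  haveI : Nonempty (Fin d) := ⟨⟨0, by omega⟩⟩
  haveI : Nontrivial (EuclideanSpace ℝ (Fin d)) := by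
    refine Module.nontrivial_of_finrank_pos (R := ℝ) ?_
    rw [finrank_euclideanSpace_fin]; omega
  rw [Measure.toSphere_apply_univ]
  refine mul_ne_zero ?_ ?_
  · simp [finrank_euclideanSpace_fin]; omega
  · exact (measure_ball_pos _ _ one_pos).ne'

lemma RK.toSphere_univ_ne_top (d : ℕ) :
    ((volume : Measure (EuclideanSpace ℝ (Fin d))).toSphere Set.univ) ≠ ⊤ :=
  (measure_lt_top _ _).ne

lemma RK.uniformSphere_prob (d : ℕ) (hd : 1 ≤ d) :
    IsProbabilityMeasure (uniformSphere d) := by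
  constructor
  rw [uniformSphere, Measure.smul_apply, smul_eq_mul]
  exact ENNReal.inv_mul_cancel (RK.toSphere_univ_ne_zero d hd) (RK.toSphere_univ_ne_top d)

lemma RK.toSphereMoment (d : ℕ) (hd : 1 ≤ d) (u : EuclideanSpace ℝ (Fin d)) (hu : ‖u‖ = 1)
    (n : ℕ) :
    ∫ ξ : sphere (0 : EuclideanSpace ℝ (Fin d)) 1,
        |⟪(ξ : EuclideanSpace ℝ (Fin d)), u⟫| ^ n
          ∂((volume : Measure (EuclideanSpace ℝ (Fin d))).toSphere)
      = 2 * Real.Gamma (((n : ℝ) + 1) / 2) * Real.sqrt Real.pi ^ (d - 1)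
          / Real.Gamma (((n : ℝ) + d) / 2) := by
  have hGnd : (0:ℝ) < Real.Gamma (((n : ℝ) + d) / 2) := by
    apply Real.Gamma_pos_of_pos; positivity
  have h := (RK.spherePolar d hd u n).symm.trans (RK.euclidGauss d hd u hu n)
  rw [eq_div_iff hGnd.ne']
  rw [mul_comm] at h
  calc _ = ((1 / 2) * Real.Gamma (((n : ℝ) + d) / 2)) * (∫ ξ : sphere (0 : EuclideanSpace ℝ (Fin d)) 1,
        |⟪(ξ : EuclideanSpace ℝ (Fin d)), u⟫| ^ n
          ∂((volume : Measure (EuclideanSpace ℝ (Fin d))).toSphere)) * 2 := by ring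
    _ = _ := by rw [h]; ring

lemma RK.toSphere_univ_toReal (d : ℕ) (hd : 1 ≤ d) :
    ((volume : Measure (EuclideanSpace ℝ (Fin d))).toSphere Set.univ).toReal
      = 2 * Real.sqrt Real.pi ^ d / Real.Gamma ((d : ℝ) / 2) := by
  haveI : Nonempty (Fin d) := ⟨⟨0, by omega⟩⟩
  set u : EuclideanSpace ℝ (Fin d) := EuclideanSpace.single ⟨0, by omega⟩ (1:ℝ) with hu'
  have hu : ‖u‖ = 1 := by rw [hu', EuclideanSpace.norm_single]; norm_num
  have h := RK.toSphereMoment d hd u hu 0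
  simp only [pow_zero, Nat.cast_zero, zero_add] at h
  rw [integral_const, smul_eq_mul, mul_one] at h
  rw [← measureReal_def, h, Real.Gamma_one_half_eq]
  have : Real.sqrt Real.pi ^ d = Real.sqrt Real.pi ^ (d - 1) * Real.sqrt Real.pi := by
    rw [← pow_succ]; congr 1; omega
  rw [this]; ring

lemma RK.uniformMoment (d : ℕ) (hd : 1 ≤ d) (u : EuclideanSpace ℝ (Fin d)) (hu : ‖u‖ = 1)
    (n : ℕ) :
    ∫ ξ : sphere (0 : EuclideanSpace ℝ (Fin d)) 1,
        |⟪(ξ : EuclideanSpace ℝ (Fin d)), u⟫| ^ n ∂(uniformSphere d)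
      = Real.Gamma (((n : ℝ) + 1) / 2) * Real.Gamma ((d : ℝ) / 2)
          / (Real.sqrt Real.pi * Real.Gamma (((n : ℝ) + d) / 2)) := by
  have hGnd : (0:ℝ) < Real.Gamma (((n : ℝ) + d) / 2) := by
    apply Real.Gamma_pos_of_pos; positivity
  have hGd : (0:ℝ) < Real.Gamma ((d : ℝ) / 2) := by
    apply Real.Gamma_pos_of_pos; positivity
  have hs : (0:ℝ) < Real.sqrt Real.pi ^ (d - 1) := pow_pos RK.sqrtpi_pos _
  rw [uniformSphere, integral_smul_measure, ENNReal.toReal_inv, RK.toSphere_univ_toReal d hd,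
    RK.toSphereMoment d hd u hu n, smul_eq_mul]
  have hπd : Real.sqrt Real.pi ^ d = Real.sqrt Real.pi ^ (d - 1) * Real.sqrt Real.pi := by
    rw [← pow_succ]; congr 1; omega
  rw [hπd]
  field_simp

end aux2
section aux3
open Real Set

lemma RK.r_pos (d : ℕ) (hd : 1 ≤ d) (n : ℕ) :
    (0:ℝ) < Real.sqrt Real.pi * Real.Gamma (((n : ℝ) + d) / 2) /
      (Real.Gamma ((d : ℝ) / 2) * Real.Gamma (((n : ℝ) + 1) / 2)) := by
  have h1 : (0:ℝ) < Real.Gamma (((n : ℝ) + d) / 2) := by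
    apply Real.Gamma_pos_of_pos; positivity
  have h2 : (0:ℝ) < Real.Gamma ((d : ℝ) / 2) := by
    apply Real.Gamma_pos_of_pos; positivity
  have h3 : (0:ℝ) < Real.Gamma (((n : ℝ) + 1) / 2) := by
    apply Real.Gamma_pos_of_pos; positivity
  have := RK.sqrtpi_pos
  positivity

lemma RK.r_rec (d : ℕ) (hd : 1 ≤ d) (n : ℕ) :
    Real.sqrt Real.pi * Real.Gamma ((((n+2 : ℕ) : ℝ) + d) / 2) /
      (Real.Gamma ((d : ℝ) / 2) * Real.Gamma ((((n+2 : ℕ) : ℝ) + 1) / 2))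
    = (Real.sqrt Real.pi * Real.Gamma (((n : ℝ) + d) / 2) /
      (Real.Gamma ((d : ℝ) / 2) * Real.Gamma (((n : ℝ) + 1) / 2)))
      * (((n : ℝ) + d) / ((n : ℝ) + 1)) := by
  have e1 : (((n+2 : ℕ) : ℝ) + d) / 2 = ((n : ℝ) + d) / 2 + 1 := by push_cast; ring
  have e2 : (((n+2 : ℕ) : ℝ) + 1) / 2 = ((n : ℝ) + 1) / 2 + 1 := by push_cast; ring
  have h1 : ((n : ℝ) + d) / 2 ≠ 0 := by positivity
  have h2 : ((n : ℝ) + 1) / 2 ≠ 0 := by positivity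
  rw [e1, e2, Real.Gamma_add_one h1, Real.Gamma_add_one h2]
  have hGd : (0:ℝ) < Real.Gamma ((d : ℝ) / 2) := by
    apply Real.Gamma_pos_of_pos; positivity
  have hGn1 : (0:ℝ) < Real.Gamma (((n : ℝ) + 1) / 2) := by
    apply Real.Gamma_pos_of_pos; positivity
  have hn1 : ((n:ℝ) + 1) ≠ 0 := by positivity
  field_simp

lemma RK.r_bound (d : ℕ) (hd : 1 ≤ d) :
    ∃ M : ℝ, 0 < M ∧ ∀ n : ℕ,
      Real.sqrt Real.pi * Real.Gamma (((n : ℝ) + d) / 2) /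
        (Real.Gamma ((d : ℝ) / 2) * Real.Gamma (((n : ℝ) + 1) / 2)) ≤ M * (d:ℝ) ^ n := by
  set r : ℕ → ℝ := fun n => Real.sqrt Real.pi * Real.Gamma (((n : ℝ) + d) / 2) /
    (Real.Gamma ((d : ℝ) / 2) * Real.Gamma (((n : ℝ) + 1) / 2)) with hr
  refine ⟨max (r 0) (r 1), lt_max_of_lt_left (RK.r_pos d hd 0), ?_⟩
  have hd1 : (1:ℝ) ≤ (d:ℝ) := by exact_mod_cast hd
  have hM0 : (0:ℝ) < max (r 0) (r 1) := lt_max_of_lt_left (RK.r_pos d hd 0)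
  intro n
  induction n using Nat.strong_induction_on with
  | _ n ih =>
    match n with
    | 0 => rw [pow_zero, mul_one]; exact le_max_left _ _
    | 1 =>
      have : max (r 0) (r 1) * (d:ℝ) ^ 1 ≥ max (r 0) (r 1) * 1 := by
        apply mul_le_mul_of_nonneg_left (by simpa using hd1) hM0.le
      calc r 1 ≤ max (r 0) (r 1) := le_max_right _ _
        _ = max (r 0) (r 1) * 1 := by ring
        _ ≤ max (r 0) (r 1) * (d:ℝ) ^ 1 := this
    | (n+2) =>
      have hrec : r (n+2) = r n * (((n : ℝ) + d) / ((n : ℝ) + 1)) := RK.r_rec d hd n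
      have hq : ((n : ℝ) + d) / ((n : ℝ) + 1) ≤ (d:ℝ) := by
        rw [div_le_iff₀ (by positivity)]
        have : (n:ℝ) ≤ (d:ℝ) * n := le_mul_of_one_le_left (Nat.cast_nonneg n) hd1
        nlinarith
      have hqpos : (0:ℝ) ≤ ((n : ℝ) + d) / ((n : ℝ) + 1) := by positivity
      calc r (n+2) = r n * (((n : ℝ) + d) / ((n : ℝ) + 1)) := hrec
        _ ≤ (max (r 0) (r 1) * (d:ℝ) ^ n) * (d:ℝ) :=
          mul_le_mul (ih n (by omega)) hq hqpos (by positivity)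
        _ = max (r 0) (r 1) * (d:ℝ) ^ (n+1) := by ring
        _ ≤ max (r 0) (r 1) * (d:ℝ) ^ (n+2) := by
          apply mul_le_mul_of_nonneg_left _ hM0.le
          apply pow_le_pow_right₀ hd1 (by omega)

lemma RK.summable_b (d : ℕ) (hd : 1 ≤ d) (a : ℕ → ℝ)
    (ha : ∀ x : ℝ, 0 ≤ x → Summable (fun n : ℕ => a n * x ^ n))
    (b : ℕ → ℝ)
    (hb : ∀ n : ℕ, b n =
      Real.sqrt Real.pi * Real.Gamma (((n : ℝ) + d) / 2) /
        (Real.Gamma ((d : ℝ) / 2) * Real.Gamma (((n : ℝ) + 1) / 2)) * a n) :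
    ∀ x : ℝ, 0 ≤ x → Summable (fun n : ℕ => b n * x ^ n) := by
  obtain ⟨M, hM, hMb⟩ := RK.r_bound d hd
  intro x hx
  rw [← summable_abs_iff]
  have hsum : Summable (fun n : ℕ => M * |a n * ((d:ℝ) * x) ^ n|) :=
    ((summable_abs_iff.2 (ha ((d:ℝ) * x) (by positivity))).mul_left M)
  refine hsum.of_nonneg_of_le (fun n => abs_nonneg _) (fun n => ?_)
  rw [hb n, abs_mul, abs_mul, abs_pow, abs_of_nonneg hx,
    abs_of_nonneg (RK.r_pos d hd n).le]
  rw [abs_mul, abs_pow, abs_mul, abs_of_nonneg (Nat.cast_nonneg d : (0:ℝ) ≤ d),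
    abs_of_nonneg hx, mul_pow, ← mul_assoc]
  calc _ ≤ M * (d:ℝ) ^ n * |a n| * x ^ n :=
      mul_le_mul_of_nonneg_right
        (mul_le_mul_of_nonneg_right (hMb n) (abs_nonneg _)) (pow_nonneg hx n)
    _ = M * |a n| * ((d:ℝ) ^ n * x ^ n) := by ring

end aux3
section aux4
open Real Set

lemma RK.termIntegral (d : ℕ) (hd : 1 ≤ d) (v : EuclideanSpace ℝ (Fin d)) (n : ℕ) :
    ∫ ξ : sphere (0 : EuclideanSpace ℝ (Fin d)) 1,
        |⟪(ξ : EuclideanSpace ℝ (Fin d)), v⟫| ^ n ∂(uniformSphere d)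
      = (Real.Gamma (((n : ℝ) + 1) / 2) * Real.Gamma ((d : ℝ) / 2)
          / (Real.sqrt Real.pi * Real.Gamma (((n : ℝ) + d) / 2))) * ‖v‖ ^ n := by
  haveI := RK.uniformSphere_prob d hd
  by_cases hv : v = 0
  · subst hv
    simp only [inner_zero_right, abs_zero, norm_zero]
    rw [integral_const, probReal_univ, one_smul]
    cases n with
    | zero =>
      simp only [pow_zero, mul_one, Nat.cast_zero, zero_add]
      rw [Real.Gamma_one_half_eq]
      have hGd : (0:ℝ) < Real.Gamma ((d : ℝ) / 2) := by
        apply Real.Gamma_pos_of_pos; positivity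
      rw [eq_comm, div_eq_one_iff_eq (by positivity)]
    | succ m => simp [zero_pow]
  · have hvn : (0:ℝ) < ‖v‖ := norm_pos_iff.2 hv
    set u : EuclideanSpace ℝ (Fin d) := ‖v‖⁻¹ • v with hu'
    have hu : ‖u‖ = 1 := norm_smul_inv_norm hv
    have hvu : v = ‖v‖ • u := by
      rw [hu', smul_smul, mul_inv_cancel₀ hvn.ne', one_smul]
    have hpt : ∀ ξ : sphere (0 : EuclideanSpace ℝ (Fin d)) 1,
        |⟪(ξ : EuclideanSpace ℝ (Fin d)), v⟫| ^ n
          = ‖v‖ ^ n * |⟪(ξ : EuclideanSpace ℝ (Fin d)), u⟫| ^ n := by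
      intro ξ
      have h2 : ‖v‖ ^ n * |⟪(ξ : EuclideanSpace ℝ (Fin d)), u⟫| ^ n
          = |⟪(ξ : EuclideanSpace ℝ (Fin d)), v⟫| ^ n := by
        rw [hu', real_inner_smul_right, abs_mul, abs_inv, abs_norm, mul_pow, ← mul_assoc,
          ← mul_pow, mul_inv_cancel₀ hvn.ne', one_pow, one_mul]
      exact h2.symm
    simp_rw [hpt]
    rw [integral_const_mul, RK.uniformMoment d hd u hu n]
    ring

end aux4

/-- Every radial kernel `K(x,y) = F(‖x-y‖)` with globally convergent analytic basis
function `F(x) = ∑ aₙ xⁿ` is the sliced version of the one-dimensional radial kernel with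
basis function `f(x) = ∑ bₙ xⁿ`, where `bₙ = (√π Γ((n+d)/2)/(Γ(d/2)Γ((n+1)/2))) aₙ`;
moreover the series for `f` converges for every `x ≥ 0`. -/
theorem radial_kernel_eq_sliced_of_analytic (d : ℕ) (hd : 2 ≤ d) (a : ℕ → ℝ)
    (ha : ∀ x : ℝ, 0 ≤ x → Summable (fun n : ℕ => a n * x ^ n))
    (b : ℕ → ℝ)
    (hb : ∀ n : ℕ, b n =
      Real.sqrt Real.pi * Real.Gamma (((n : ℝ) + d) / 2) /
        (Real.Gamma ((d : ℝ) / 2) * Real.Gamma (((n : ℝ) + 1) / 2)) * a n) :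
    (∀ x : ℝ, 0 ≤ x → Summable (fun n : ℕ => b n * x ^ n)) ∧
    ∀ x y : EuclideanSpace ℝ (Fin d),
      (∫ ξ : sphere (0 : EuclideanSpace ℝ (Fin d)) 1,
          (∑' n : ℕ, b n * |⟪(ξ : EuclideanSpace ℝ (Fin d)), x - y⟫| ^ n)
          ∂(uniformSphere d))
        = ∑' n : ℕ, a n * ‖x - y‖ ^ n := by
  have hd1 : 1 ≤ d := by omega
  have hsummb := RK.summable_b d hd1 a ha b hb
  refine ⟨hsummb, fun x y => ?_⟩
  haveI := RK.uniformSphere_prob d hd1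
  set v : EuclideanSpace ℝ (Fin d) := x - y with hv
  -- per-term value
  have hterm : ∀ n : ℕ,
      ∫ ξ : sphere (0 : EuclideanSpace ℝ (Fin d)) 1,
        b n * |⟪(ξ : EuclideanSpace ℝ (Fin d)), v⟫| ^ n ∂(uniformSphere d)
      = a n * ‖v‖ ^ n := by
    intro n
    rw [integral_const_mul, RK.termIntegral d hd1 v n, hb n]
    have hGnd : (0:ℝ) < Real.Gamma (((n : ℝ) + d) / 2) := by
      apply Real.Gamma_pos_of_pos; positivity
    have hGd : (0:ℝ) < Real.Gamma ((d : ℝ) / 2) := by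
      apply Real.Gamma_pos_of_pos; positivity
    have hGn1 : (0:ℝ) < Real.Gamma (((n : ℝ) + 1) / 2) := by
      apply Real.Gamma_pos_of_pos; positivity
    have hsπ := RK.sqrtpi_pos
    field_simp
  have hmeas : ∀ n : ℕ, AEStronglyMeasurable
      (fun ξ : sphere (0 : EuclideanSpace ℝ (Fin d)) 1 =>
        b n * |⟪(ξ : EuclideanSpace ℝ (Fin d)), v⟫| ^ n) (uniformSphere d) := by
    intro n
    exact (continuous_const.mul
      (((continuous_subtype_val.inner continuous_const).abs).pow n)).aestronglyMeasurable
  have hsumabs : Summable (fun n : ℕ => |b n| * ‖v‖ ^ n) := by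
    refine ((summable_abs_iff.2 (hsummb ‖v‖ (norm_nonneg v))).congr fun n => ?_)
    rw [abs_mul, abs_pow, abs_norm]
  have hbnd : ∑' n : ℕ, ∫⁻ ξ : sphere (0 : EuclideanSpace ℝ (Fin d)) 1,
      ‖b n * |⟪(ξ : EuclideanSpace ℝ (Fin d)), v⟫| ^ n‖₊ ∂(uniformSphere d) ≠ ⊤ := by
    have hle : ∀ n : ℕ, ∫⁻ ξ : sphere (0 : EuclideanSpace ℝ (Fin d)) 1,
        ‖b n * |⟪(ξ : EuclideanSpace ℝ (Fin d)), v⟫| ^ n‖₊ ∂(uniformSphere d)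
          ≤ ENNReal.ofReal (|b n| * ‖v‖ ^ n) := by
      intro n
      have hptle : ∀ ξ : sphere (0 : EuclideanSpace ℝ (Fin d)) 1,
          (‖b n * |⟪(ξ : EuclideanSpace ℝ (Fin d)), v⟫| ^ n‖₊ : ENNReal)
            ≤ ENNReal.ofReal (|b n| * ‖v‖ ^ n) := by
        intro ξ
        have h1 : |⟪(ξ : EuclideanSpace ℝ (Fin d)), v⟫| ≤ ‖v‖ := by
          have := abs_real_inner_le_norm (ξ : EuclideanSpace ℝ (Fin d)) v
          rwa [mem_sphere_zero_iff_norm.1 ξ.2, one_mul] at this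
        rw [← enorm_eq_nnnorm, ← ofReal_norm]
        apply ENNReal.ofReal_le_ofReal
        rw [Real.norm_eq_abs, abs_mul, abs_pow, abs_abs]
        exact mul_le_mul_of_nonneg_left (pow_le_pow_left₀ (abs_nonneg _) h1 n) (abs_nonneg _)
      calc _ ≤ ∫⁻ _ : sphere (0 : EuclideanSpace ℝ (Fin d)) 1,
            ENNReal.ofReal (|b n| * ‖v‖ ^ n) ∂(uniformSphere d) := lintegral_mono hptle
        _ = ENNReal.ofReal (|b n| * ‖v‖ ^ n) := by
          rw [lintegral_const, measure_univ, mul_one]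
    refine ne_of_lt ((ENNReal.tsum_le_tsum hle).trans_lt ?_)
    rw [← ENNReal.ofReal_tsum_of_nonneg
      (fun n => mul_nonneg (abs_nonneg _) (pow_nonneg (norm_nonneg v) n)) hsumabs]
    exact ENNReal.ofReal_lt_top
  rw [integral_tsum hmeas hbnd]
  exact tsum_congr hterm
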